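/- arXiv:2201.03103 — 4 statements merged into one kernel-verified Lean document; each statement's English description precedes it below -/
import Mathlib

section
/- Let A ∈ ℝ^{n×n} be a matrix with a real eigenvalue λ₁ of strictly largest absolute value with right eigenvector v, and let R ∈ ℝ^{k×n} with ker R = span(v). For any p ∈ [1,∞], the R-weighted induced seminorm ⟦A⟧_{p,R} := sup { ‖RAx‖_p : ‖Rx‖_p ≤ 1, x ⊥ span(v) } satisfies ⟦A⟧_{p,R} ≥ ρ_ess(A), where ρ_ess(A) is the maximum modulus among eigenvalues of A other than λ₁. -/
open Matrix


private lemma aux_pow_le {r N C δ : ℝ} (hδ : 0 < δ) (hN : 0 ≤ N)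
    (h : ∀ m : ℕ, δ * r ^ m ≤ C * N ^ m) : r ≤ N := by
  by_contra h'
  push_neg at h'
  have hr0 : 0 < r := lt_of_le_of_lt hN h'
  have hlt : N / r < 1 := (div_lt_one hr0).mpr h'
  have htend : Filter.Tendsto (fun m : ℕ => C * (N / r) ^ m) Filter.atTop (nhds (C * 0)) :=
    Filter.Tendsto.const_mul C (tendsto_pow_atTop_nhds_zero_of_lt_one
      (by positivity) hlt)
  rw [mul_zero] at htend
  obtain ⟨m, hm⟩ := (htend.eventually_lt_const hδ).exists
  have hrm : (0:ℝ) < r ^ m := by positivity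
  have h1 : C * N ^ m < δ * r ^ m := by
    have : C * (N / r) ^ m * r ^ m < δ * r ^ m := by
      exact mul_lt_mul_of_pos_right hm hrm
    calc C * N ^ m = C * (N / r) ^ m * r ^ m := by
          rw [div_pow, mul_assoc, div_mul_cancel₀ _ (ne_of_gt hrm)]
      _ < δ * r ^ m := this
  exact absurd (h m) (not_le.mpr h1)

private lemma aux_mulVec_re {n : ℕ} (A : Matrix (Fin n) (Fin n) ℝ) (z : Fin n → ℂ) (j : Fin n) :
    ((A.map Complex.ofReal).mulVec z j).re = A.mulVec (fun i => (z i).re) j := by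
  simp [Matrix.mulVec, dotProduct, Complex.re_sum, Complex.mul_re]

private lemma aux_mulVec_im {n : ℕ} (A : Matrix (Fin n) (Fin n) ℝ) (z : Fin n → ℂ) (j : Fin n) :
    ((A.map Complex.ofReal).mulVec z j).im = A.mulVec (fun i => (z i).im) j := by
  simp [Matrix.mulVec, dotProduct, Complex.im_sum, Complex.mul_im]

private lemma aux_dot_re {n : ℕ} (v : Fin n → ℝ) (z : Fin n → ℂ) :
    ((fun i => (v i : ℂ)) ⬝ᵥ z).re = v ⬝ᵥ (fun i => (z i).re) := by
  simp [dotProduct, Complex.re_sum, Complex.mul_re]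

private lemma aux_dot_im {n : ℕ} (v : Fin n → ℝ) (z : Fin n → ℂ) :
    ((fun i => (v i : ℂ)) ⬝ᵥ z).im = v ⬝ᵥ (fun i => (z i).im) := by
  simp [dotProduct, Complex.im_sum, Complex.mul_im]

noncomputable def pnorm (p : ENNReal) [Fact (1 ≤ p)] {n : ℕ} (x : Fin n → ℝ) : ℝ :=
  ‖(WithLp.equiv p (Fin n → ℝ)).symm x‖

set_option maxHeartbeats 1600000 in
/-- If `A` has a real eigenvalue `λ₁` of strictly largest modulus with right
eigenvector `v`, and `ker R = span(v)`, then for any `p ∈ [1,∞]` the `R`-weighted induced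
seminorm `⟦A⟧_{p,R}` dominates the essential spectral radius
`ρ_ess(A) = max {|μ| : μ ∈ spec(A), μ ≠ λ₁}`. -/
theorem stmt13 {n k : ℕ} (p : ENNReal) [Fact (1 ≤ p)]
    (A : Matrix (Fin n) (Fin n) ℝ) (lam1 : ℝ) (v : Fin n → ℝ) (hv : v ≠ 0)
    (heig : A.mulVec v = lam1 • v)
    (hdom : ∀ μ ∈ spectrum ℂ (A.map Complex.ofReal), μ ≠ (lam1 : ℂ) →
      ‖μ‖ < |lam1|)
    (R : Matrix (Fin k) (Fin n) ℝ)
    (hker : ∀ x : Fin n → ℝ, R.mulVec x = 0 ↔ ∃ t : ℝ, x = t • v) :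
    sSup {r : ℝ | ∃ μ : ℂ, μ ∈ spectrum ℂ (A.map Complex.ofReal) ∧ μ ≠ (lam1 : ℂ) ∧
        r = ‖μ‖}
      ≤ sSup {r : ℝ | ∃ x : Fin n → ℝ, pnorm p (R.mulVec x) ≤ 1 ∧ v ⬝ᵥ x = 0 ∧
          r = pnorm p (R.mulVec (A.mulVec x))} := by
  classical
  set q : (Fin n → ℝ) → ℝ := fun z => pnorm p (R.mulVec z) with hqdef
  set S : Set ℝ := {r : ℝ | ∃ x : Fin n → ℝ, pnorm p (R.mulVec x) ≤ 1 ∧ v ⬝ᵥ x = 0 ∧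
          r = pnorm p (R.mulVec (A.mulVec x))} with hSdef
  -- basic facts about v
  have hvv : 0 < v ⬝ᵥ v := by
    have h1 : v ⬝ᵥ v ≠ 0 := fun h => hv (dotProduct_self_eq_zero.mp h)
    have h2 : 0 ≤ v ⬝ᵥ v := Finset.sum_nonneg (fun i _ => mul_self_nonneg _)
    exact lt_of_le_of_ne h2 (Ne.symm h1)
  have hRv : R.mulVec v = 0 := (hker v).mpr ⟨1, (one_smul _ _).symm⟩
  -- q is a seminorm, positive on W \ {0}
  have hqzero : ∀ z : Fin n → ℝ, q z = 0 ↔ R.mulVec z = 0 := by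
    intro z
    simp only [hqdef, pnorm]
    rw [norm_eq_zero]
    constructor
    · intro h
      have := congrArg (WithLp.equiv p (Fin k → ℝ)) h
      simpa using this
    · intro h; rw [h]; simp
  have hqnonneg : ∀ z, 0 ≤ q z := fun z => norm_nonneg _
  have hqsmul : ∀ (c : ℝ) (z : Fin n → ℝ), q (c • z) = |c| * q z := by
    intro c z
    simp only [hqdef, pnorm, Matrix.mulVec_smul, WithLp.equiv_symm_apply, WithLp.toLp_smul, norm_smul,
      Real.norm_eq_abs]
  have hqpos : ∀ z : Fin n → ℝ, v ⬝ᵥ z = 0 → z ≠ 0 → 0 < q z := by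
    intro z hz hz0
    rcases lt_or_eq_of_le (hqnonneg z) with h | h
    · exact h
    · exfalso
      obtain ⟨t, rfl⟩ := (hker z).mp ((hqzero z).mp h.symm)
      rw [dotProduct_smul, smul_eq_mul] at hz
      rcases mul_eq_zero.mp hz with h | h
      · exact hz0 (by rw [h, zero_smul])
      · exact absurd h (ne_of_gt hvv)
  -- the subspace W and linear maps for boundedness
  let dpl : (Fin n → ℝ) →ₗ[ℝ] ℝ :=
    { toFun := fun x => v ⬝ᵥ x
      map_add' := fun x y => dotProduct_add v x y
      map_smul' := fun c x => by simp [dotProduct_smul] }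
  let W : Submodule ℝ (Fin n → ℝ) := LinearMap.ker dpl
  haveI : FiniteDimensional ℝ (WithLp p (Fin k → ℝ)) :=
    (WithLp.linearEquiv p ℝ (Fin k → ℝ)).symm.finiteDimensional
  let φ : (Fin n → ℝ) →ₗ[ℝ] WithLp p (Fin k → ℝ) :=
    ((WithLp.linearEquiv p ℝ (Fin k → ℝ)).symm.toLinearMap).comp R.mulVecLin
  have hφ : ∀ z : Fin n → ℝ, ‖φ z‖ = q z := fun z => rfl
  let f : W →ₗ[ℝ] WithLp p (Fin k → ℝ) := φ.comp W.subtype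
  let g : W →ₗ[ℝ] WithLp p (Fin k → ℝ) := (φ.comp A.mulVecLin).comp W.subtype
  have hfker : LinearMap.ker f = ⊥ := by
    rw [LinearMap.ker_eq_bot']
    intro m hm
    have hRm : R.mulVec (m : Fin n → ℝ) = 0 := by
      have := congrArg (WithLp.equiv p (Fin k → ℝ)) hm
      simpa [f, φ] using this
    obtain ⟨t, ht⟩ := (hker _).mp hRm
    have hmW : v ⬝ᵥ (m : Fin n → ℝ) = 0 := m.2
    rw [ht, dotProduct_smul, smul_eq_mul] at hmW
    rcases mul_eq_zero.mp hmW with h | h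
    · ext1; simp [ht, h]
    · exact absurd h (ne_of_gt hvv)
  obtain ⟨h, hh⟩ := f.exists_leftInverse_of_injective hfker
  let E := LinearMap.toContinuousLinearMap (g.comp h)
  have hgf : ∀ m : W, ‖g m‖ ≤ ‖E‖ * ‖f m‖ := by
    intro m
    have h1 : h (f m) = m := by
      have := LinearMap.ext_iff.mp hh m
      simpa using this
    have h2 : g m = E (f m) := by
      simp only [E, LinearMap.coe_toContinuousLinearMap', LinearMap.comp_apply, h1]
    rw [h2]
    exact E.le_opNorm _
  have hSbdd : BddAbove S := by
    refine ⟨‖E‖, ?_⟩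
    rintro r ⟨x, hx1, hx2, rfl⟩
    have hxW : x ∈ W := hx2
    have h1 : pnorm p (R.mulVec (A.mulVec x)) = ‖g ⟨x, hxW⟩‖ := rfl
    have h2 : pnorm p (R.mulVec x) = ‖f ⟨x, hxW⟩‖ := rfl
    calc pnorm p (R.mulVec (A.mulVec x)) = ‖g ⟨x, hxW⟩‖ := h1
      _ ≤ ‖E‖ * ‖f ⟨x, hxW⟩‖ := hgf _
      _ = ‖E‖ * pnorm p (R.mulVec x) := by rw [h2]
      _ ≤ ‖E‖ * 1 := by
          exact mul_le_mul_of_nonneg_left hx1 (norm_nonneg _)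
      _ = ‖E‖ := mul_one _
  have h0S : (0:ℝ) ∈ S := by
    refine ⟨0, ?_, ?_, ?_⟩ <;> simp [pnorm]
  set N : ℝ := sSup S with hNdef
  have hN0 : 0 ≤ N := le_csSup hSbdd h0S
  -- key seminorm contraction property
  have hkey : ∀ z : Fin n → ℝ, v ⬝ᵥ z = 0 → q (A.mulVec z) ≤ N * q z := by
    intro z hz
    rcases eq_or_lt_of_le (hqnonneg z) with h | h
    · -- q z = 0 forces z = 0
      have hz0 : z = 0 := by
        obtain ⟨t, ht⟩ := (hker z).mp ((hqzero z).mp h.symm)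
        rw [ht, dotProduct_smul, smul_eq_mul] at hz
        rcases mul_eq_zero.mp hz with h' | h'
        · rw [ht, h', zero_smul]
        · exact absurd h' (ne_of_gt hvv)
      rw [hz0]
      simp only [Matrix.mulVec_zero]
      have : q 0 = 0 := by
        have : (0 : Fin n → ℝ) = (0:ℝ) • (0 : Fin n → ℝ) := by simp
        rw [this, hqsmul]; simp
      rw [this, mul_zero]
    · set c := q z with hc
      have hmem : c⁻¹ * q (A.mulVec z) ∈ S := by
        refine ⟨c⁻¹ • z, ?_, ?_, ?_⟩
        · show pnorm p (R.mulVec (c⁻¹ • z)) ≤ 1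
          have : pnorm p (R.mulVec (c⁻¹ • z)) = q (c⁻¹ • z) := rfl
          rw [this, hqsmul, abs_of_nonneg (inv_nonneg.mpr (le_of_lt h)), ← hc,
            inv_mul_cancel₀ (ne_of_gt h)]
        · rw [dotProduct_smul, hz, smul_zero]
        · rw [Matrix.mulVec_smul]
          show c⁻¹ * q (A.mulVec z) = q (c⁻¹ • A.mulVec z)
          rw [hqsmul, abs_of_nonneg (inv_nonneg.mpr (le_of_lt h))]
      have := le_csSup hSbdd hmem
      calc q (A.mulVec z) = c * (c⁻¹ * q (A.mulVec z)) := by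
            field_simp
        _ ≤ c * N := mul_le_mul_of_nonneg_left this (le_of_lt h)
        _ = N * c := mul_comm _ _
  -- the projected operator T
  set T : (Fin n → ℝ) → (Fin n → ℝ) :=
    fun z => A.mulVec z - ((v ⬝ᵥ A.mulVec z) / (v ⬝ᵥ v)) • v with hTdef
  have hTv : ∀ z, v ⬝ᵥ T z = 0 := by
    intro z
    simp only [hTdef, dotProduct_sub, dotProduct_smul, smul_eq_mul]
    rw [div_mul_cancel₀ _ (ne_of_gt hvv), sub_self]
  have hqT : ∀ z, q (T z) = q (A.mulVec z) := by
    intro z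
    simp only [hTdef, hqdef, Matrix.mulVec_sub, Matrix.mulVec_smul, hRv, smul_zero, sub_zero]
  have hTlin : ∀ (s t : ℝ) (x y : Fin n → ℝ), T (s • x + t • y) = s • T x + t • T y := by
    intro s t x y
    funext j
    simp only [hTdef, Matrix.mulVec_add, Matrix.mulVec_smul, dotProduct_add, dotProduct_smul,
      Pi.add_apply, Pi.sub_apply, Pi.smul_apply, smul_eq_mul]
    field_simp
    ring
  have hTW : ∀ (m : ℕ) (z : Fin n → ℝ), v ⬝ᵥ z = 0 → v ⬝ᵥ (T^[m] z) = 0 := by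
    intro m z hz
    cases m with
    | zero => simpa using hz
    | succ m => rw [Function.iterate_succ_apply']; exact hTv _
  have hiter : ∀ (m : ℕ) (z : Fin n → ℝ), v ⬝ᵥ z = 0 → q (T^[m] z) ≤ N ^ m * q z := by
    intro m
    induction m with
    | zero => intro z hz; simp
    | succ m ih =>
      intro z hz
      rw [Function.iterate_succ_apply']
      calc q (T (T^[m] z)) = q (A.mulVec (T^[m] z)) := hqT _
        _ ≤ N * q (T^[m] z) := hkey _ (hTW m z hz)
        _ ≤ N * (N ^ m * q z) := mul_le_mul_of_nonneg_left (ih z hz) hN0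
        _ = N ^ (m+1) * q z := by ring
  -- main bound for each eigenvalue
  have hmain : ∀ μ : ℂ, μ ∈ spectrum ℂ (A.map Complex.ofReal) → μ ≠ (lam1 : ℂ) →
      ‖μ‖ ≤ N := by
    intro μ hμs hμne
    set M : Matrix (Fin n) (Fin n) ℂ := A.map Complex.ofReal with hMdef
    -- extract an eigenvector
    have hdet : (μ • (1 : Matrix (Fin n) (Fin n) ℂ) - M).det = 0 := by
      have h1 : ¬ IsUnit (algebraMap ℂ (Matrix (Fin n) (Fin n) ℂ) μ - M) :=
        spectrum.mem_iff.mp hμs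
      rw [Algebra.algebraMap_eq_smul_one] at h1
      by_contra hc
      exact h1 ((Matrix.isUnit_iff_isUnit_det _).mpr (isUnit_iff_ne_zero.mpr hc))
    obtain ⟨u, hu0, huz⟩ := Matrix.exists_mulVec_eq_zero_iff.mpr hdet
    have heigu : M.mulVec u = μ • u := by
      rw [Matrix.sub_mulVec, Matrix.smul_mulVec, Matrix.one_mulVec, sub_eq_zero] at huz
      exact huz.symm
    set vc : Fin n → ℂ := fun i => (v i : ℂ) with hvcdef
    have hvcvc : vc ⬝ᵥ vc = ((v ⬝ᵥ v : ℝ) : ℂ) := by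
      simp [hvcdef, dotProduct]
    have hMvc : M.mulVec vc = (lam1 : ℂ) • vc := by
      funext j
      have hj := congrFun heig j
      simp only [Matrix.mulVec, dotProduct, Pi.smul_apply, smul_eq_mul] at hj ⊢
      simp only [hMdef, Matrix.map_apply, hvcdef]
      exact_mod_cast congrArg (Complex.ofReal) hj
    set c : ℂ := (vc ⬝ᵥ u) / ((v ⬝ᵥ v : ℝ) : ℂ) with hcdef
    have hvvne : ((v ⬝ᵥ v : ℝ) : ℂ) ≠ 0 := by
      exact_mod_cast ne_of_gt hvv
    set x : Fin n → ℂ := u - c • vc with hxdef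
    have hvcx : vc ⬝ᵥ x = 0 := by
      rw [hxdef, dotProduct_sub, dotProduct_smul, hvcvc, smul_eq_mul, hcdef,
        div_mul_cancel₀ _ hvvne, sub_self]
    have hx0 : x ≠ 0 := by
      intro hc
      have hu : u = c • vc := by rwa [hxdef, sub_eq_zero] at hc
      have h1 : M.mulVec u = (lam1 : ℂ) • u := by
        rw [hu, Matrix.mulVec_smul, hMvc, smul_comm]
      rw [heigu] at h1
      have h2 : (μ - (lam1 : ℂ)) • u = 0 := by
        rw [sub_smul, h1, sub_self]
      rcases smul_eq_zero.mp h2 with h | h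
      · exact hμne (by rwa [sub_eq_zero] at h)
      · exact hu0 h
    have hMx : M.mulVec x = μ • x + (c * (μ - (lam1:ℂ))) • vc := by
      rw [hxdef, Matrix.mulVec_sub, heigu, Matrix.mulVec_smul, hMvc]
      module
    -- real and imaginary parts
    set a : Fin n → ℝ := fun j => (x j).re with hadef
    set b : Fin n → ℝ := fun j => (x j).im with hbdef
    have hva : v ⬝ᵥ a = 0 := by
      have := congrArg Complex.re hvcx
      rw [aux_dot_re] at this
      simpa using this
    have hvb : v ⬝ᵥ b = 0 := by
      have := congrArg Complex.im hvcx
      rw [aux_dot_im] at this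
      simpa using this
    set γ : ℂ := c * (μ - (lam1:ℂ)) with hγdef
    have hAa : A.mulVec a = μ.re • a - μ.im • b + γ.re • v := by
      funext j
      have h1 : (A.mulVec a) j = (M.mulVec x j).re := (aux_mulVec_re A x j).symm
      rw [h1, hMx]
      simp only [Pi.add_apply, Pi.smul_apply, Pi.sub_apply, smul_eq_mul, Complex.add_re,
        Complex.mul_re, hvcdef, Complex.ofReal_re, Complex.ofReal_im]
      ring
    have hAb : A.mulVec b = μ.im • a + μ.re • b + γ.im • v := by
      funext j
      have h1 : (A.mulVec b) j = (M.mulVec x j).im := (aux_mulVec_im A x j).symm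
      rw [h1, hMx]
      simp only [Pi.add_apply, Pi.smul_apply, Pi.sub_apply, smul_eq_mul, Complex.add_im,
        Complex.mul_im, hvcdef, Complex.ofReal_re, Complex.ofReal_im]
      ring
    have hTa : T a = μ.re • a - μ.im • b := by
      rw [hTdef]
      simp only [hAa, dotProduct_add, dotProduct_sub, dotProduct_smul, hva, hvb, smul_eq_mul,
        mul_zero, sub_zero, zero_add, add_zero]
      rw [mul_div_assoc, div_self (ne_of_gt hvv), mul_one]
      abel
    have hTb : T b = μ.im • a + μ.re • b := by
      rw [hTdef]
      simp only [hAb, dotProduct_add, dotProduct_smul, hva, hvb, smul_eq_mul,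
        mul_zero, sub_zero, zero_add, add_zero]
      rw [mul_div_assoc, div_self (ne_of_gt hvv), mul_one]
      abel
    -- iterates of T on a and b
    have hiterab : ∀ m : ℕ, T^[m] a = (μ^m).re • a - (μ^m).im • b ∧
        T^[m] b = (μ^m).im • a + (μ^m).re • b := by
      intro m
      induction m with
      | zero => constructor <;> simp
      | succ m ih =>
        obtain ⟨iha, ihb⟩ := ih
        have h1 : (μ^m).re • a - (μ^m).im • b = (μ^m).re • a + (-(μ^m).im) • b := by
          rw [neg_smul, sub_eq_add_neg]
        constructor
        · rw [Function.iterate_succ_apply', iha, h1, hTlin, hTa, hTb, pow_succ,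
            Complex.mul_re, Complex.mul_im]
          module
        · rw [Function.iterate_succ_apply', ihb, hTlin, hTa, hTb, pow_succ,
            Complex.mul_im, Complex.mul_re]
          module
    have hT0 : T (0 : Fin n → ℝ) = 0 := by
      simp [hTdef, Matrix.mulVec_zero]
    have hTsmul : ∀ (c : ℝ) (z : Fin n → ℝ), T (c • z) = c • T z := by
      intro c z
      have := hTlin c 0 z 0
      simpa [hT0] using this
    have hxab : ¬(a = 0 ∧ b = 0) := by
      rintro ⟨h1, h2⟩
      apply hx0
      funext j
      exact Complex.ext (by simpa using congrFun h1 j) (by simpa using congrFun h2 j)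
    rcases eq_or_ne μ.im 0 with him | him
    · -- real eigenvalue case
      have habs : ‖μ‖ = |μ.re| := by
        have hμeq : μ = ((μ.re : ℝ) : ℂ) := by apply Complex.ext <;> simp [him]
        have h2 := Complex.norm_real μ.re
        rw [← hμeq] at h2
        exact h2
      obtain ⟨w, hwW, hw0, hTw⟩ : ∃ w : Fin n → ℝ, v ⬝ᵥ w = 0 ∧ w ≠ 0 ∧ T w = μ.re • w := by
        rcases Decidable.not_and_iff_or_not.mp hxab with ha | hb
        · exact ⟨a, hva, ha, by rw [hTa, him, zero_smul, sub_zero]⟩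
        · exact ⟨b, hvb, hb, by rw [hTb, him, zero_smul, zero_add]⟩
      have h1 : q (T w) ≤ N * q w := by
        rw [hqT]; exact hkey w hwW
      rw [hTw, hqsmul] at h1
      rw [habs]
      exact le_of_mul_le_mul_right h1 (hqpos w hwW hw0)
    · -- genuinely complex case
      have ha0 : a ≠ 0 := by
        intro hc
        apply hxab
        refine ⟨hc, ?_⟩
        have h1 : T a = (0 : Fin n → ℝ) := by rw [hc, ← smul_zero (0:ℝ), hTsmul]; simp
        rw [hTa, hc, smul_zero, zero_sub, neg_eq_zero] at h1
        rcases smul_eq_zero.mp h1 with h | h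
        · exact absurd h him
        · exact h
      have hsmul_eqcoef : ∀ (c1 c2 : ℝ) (w : Fin n → ℝ), w ≠ 0 → c1 • w = c2 • w →
          c1 = c2 := by
        intro c1 c2 w hw hcd
        have h1 : (c1 - c2) • w = 0 := by rw [sub_smul, hcd, sub_self]
        rcases smul_eq_zero.mp h1 with h | h
        · linarith [sub_eq_zero.mp h]
        · exact absurd h hw
      have hindep : ∀ s t : ℝ, s^2 + t^2 = 1 → s • a + t • b ≠ 0 := by
        intro s t hst hc
        rcases eq_or_ne t 0 with ht | ht
        · rw [ht, zero_smul, add_zero] at hc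
          rcases smul_eq_zero.mp hc with h | h
          · rw [h, ht] at hst; norm_num at hst
          · exact ha0 h
        · set t' : ℝ := -(s/t) with ht'def
          have hb : b = t' • a := by
            funext j
            have h2 := congrFun hc j
            simp only [Pi.add_apply, Pi.smul_apply, smul_eq_mul, Pi.zero_apply] at h2
            simp only [ht'def, Pi.smul_apply, smul_eq_mul]
            field_simp
            linarith
          have h3 : T b = t' • T a := by rw [hb, hTsmul]
          rw [hTa, hTb, hb] at h3
          have h4 : (μ.im + μ.re * t') • a = (t' * μ.re - t'^2 * μ.im) • a := by
            have e1 : μ.im • a + μ.re • (t' • a) = (μ.im + μ.re * t') • a := by module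
            have e2 : t' • (μ.re • a - μ.im • (t' • a)) = (t' * μ.re - t'^2 * μ.im) • a := by
              module
            rw [← e1, ← e2]; exact h3
          have h5 := hsmul_eqcoef _ _ a ha0 h4
          have h6 : μ.im * (1 + t'^2) = 0 := by nlinarith [h5]
          rcases mul_eq_zero.mp h6 with h | h
          · exact him h
          · nlinarith [sq_nonneg t']
      -- minimum of q on the unit circle combinations
      set K : Set (ℝ × ℝ) := {st | st.1^2 + st.2^2 = 1} with hKdef
      have hKne : K.Nonempty := ⟨(1,0), by simp [hKdef]⟩
      have hKc : IsCompact K := by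
        apply Metric.isCompact_of_isClosed_isBounded
        · exact isClosed_eq (by fun_prop) continuous_const
        · apply Bornology.IsBounded.subset (Metric.isBounded_closedBall (x := (0:ℝ×ℝ)) (r := 1))
          rintro ⟨s, t⟩ hst
          simp only [hKdef, Set.mem_setOf_eq] at hst
          simp only [Metric.mem_closedBall, dist_zero_right, Prod.norm_def, Real.norm_eq_abs,
            sup_le_iff]
          have h1 : s^2 ≤ 1 := by nlinarith [sq_nonneg t]
          have h2 : t^2 ≤ 1 := by nlinarith [sq_nonneg s]
          exact ⟨(sq_le_one_iff_abs_le_one s).mp h1, (sq_le_one_iff_abs_le_one t).mp h2⟩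
      let L0 : (ℝ × ℝ) →ₗ[ℝ] (Fin n → ℝ) :=
        (LinearMap.fst ℝ ℝ ℝ).smulRight a + (LinearMap.snd ℝ ℝ ℝ).smulRight b
      let L : (ℝ × ℝ) →ₗ[ℝ] WithLp p (Fin k → ℝ) := φ.comp L0
      have hLc : Continuous fun st : ℝ × ℝ => q (st.1 • a + st.2 • b) := by
        have he : (fun st : ℝ × ℝ => q (st.1 • a + st.2 • b)) = fun st => ‖L st‖ := rfl
        rw [he]
        exact L.continuous_of_finiteDimensional.norm
      obtain ⟨st0, hst0K, hst0min⟩ := hKc.exists_isMinOn hKne hLc.continuousOn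
      set δ : ℝ := q (st0.1 • a + st0.2 • b) with hδdef
      have hδpos : 0 < δ := by
        apply hqpos
        · rw [dotProduct_add, dotProduct_smul, dotProduct_smul, hva, hvb]; simp
        · exact hindep st0.1 st0.2 hst0K
      have hδle : ∀ st : ℝ × ℝ, st ∈ K → δ ≤ q (st.1 • a + st.2 • b) := fun st hst =>
        hst0min hst
      set r : ℝ := ‖μ‖ with hrdef
      rcases eq_or_ne r 0 with hr | hr
      · rw [hr]; exact hN0
      have hkeypow : ∀ m : ℕ, δ * r ^ m ≤ q a * N ^ m := by
        intro m
        have hrm : r ^ m ≠ 0 := pow_ne_zero _ hr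
        have hrmpos : 0 ≤ r ^ m := pow_nonneg (norm_nonneg μ) m
        set s : ℝ := (μ^m).re / r^m with hsdef
        set t : ℝ := -((μ^m).im / r^m) with htdef
        have habs2 : (μ^m).re^2 + (μ^m).im^2 = (r^m)^2 := by
          have h1 := Complex.sq_norm (μ^m)
          rw [Complex.normSq_apply] at h1
          rw [hrdef, ← norm_pow]
          nlinarith [h1]
        have hstK : (s, t) ∈ K := by
          simp only [hKdef, Set.mem_setOf_eq]
          field_simp [hsdef, htdef]
          rw [hsdef, htdef, neg_sq, div_pow, div_pow, ← add_div, habs2, div_self (pow_ne_zero 2 hrm)]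
        have hTm : T^[m] a = r^m • (s • a + t • b) := by
          rw [(hiterab m).1]
          have e1 : r^m * s = (μ^m).re := by rw [hsdef, mul_comm, div_mul_cancel₀ _ hrm]
          have e2 : r^m * t = -(μ^m).im := by
            rw [htdef, mul_neg, mul_comm, div_mul_cancel₀ _ hrm]
          rw [smul_add, smul_smul, smul_smul, e1, e2, neg_smul, ← sub_eq_add_neg]
        calc δ * r^m = r^m * δ := mul_comm _ _
          _ ≤ r^m * q (s • a + t • b) :=
              mul_le_mul_of_nonneg_left (hδle (s, t) hstK) hrmpos
          _ = |r^m| * q (s • a + t • b) := by rw [abs_of_nonneg hrmpos]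
          _ = q (r^m • (s • a + t • b)) := (hqsmul _ _).symm
          _ = q (T^[m] a) := by rw [hTm]
          _ ≤ N^m * q a := hiter m a hva
          _ = q a * N^m := mul_comm _ _
      exact aux_pow_le hδpos hN0 hkeypow
  -- conclude
  refine Real.sSup_le ?_ hN0
  rintro r ⟨μ, hμs, hμne, rfl⟩
  exact hmain μ hμs hμne
end

section
/- Let A ∈ ℝ^{n×n} have a real eigenvalue of largest absolute value with right eigenvector v, and let P = Pᵀ ⪰ 0 with ker P = span(v). Then the squared P^{1/2}-weighted induced ℓ₂ seminorm of A equals the minimum b such that Aᵀ P A ⪯ b P; i.e., sup_{x ∉ ker P} (xᵀAᵀPAx)/(xᵀPx) = min { b : Aᵀ P A ⪯ b P }. -/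
open Matrix

private lemma quad_abs_bound {n : ℕ} (M : Matrix (Fin n) (Fin n) ℝ) (x : Fin n → ℝ) :
    x ⬝ᵥ M *ᵥ x ≤ (∑ i, ∑ j, |M i j|) * (x ⬝ᵥ x) := by
  have hxx : ∀ i j, |x i| * |x j| ≤ x ⬝ᵥ x := by
    intro i j
    have hi : x i ^ 2 ≤ x ⬝ᵥ x := by
      have := Finset.single_le_sum (f := fun k => x k * x k)
        (fun k _ => mul_self_nonneg (x k)) (Finset.mem_univ i)
      simpa [dotProduct, sq] using this
    have hj : x j ^ 2 ≤ x ⬝ᵥ x := by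
      have := Finset.single_le_sum (f := fun k => x k * x k)
        (fun k _ => mul_self_nonneg (x k)) (Finset.mem_univ j)
      simpa [dotProduct, sq] using this
    have h2 : 2 * |x i| * |x j| ≤ |x i| ^ 2 + |x j| ^ 2 := two_mul_le_add_sq _ _
    rw [sq_abs, sq_abs] at h2
    nlinarith
  calc x ⬝ᵥ M *ᵥ x = ∑ i, ∑ j, x i * (M i j * x j) := by
        simp [dotProduct, mulVec, Finset.mul_sum]
    _ ≤ ∑ i, ∑ j, |M i j| * (x ⬝ᵥ x) := by
        refine Finset.sum_le_sum fun i _ => Finset.sum_le_sum fun j _ => ?_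
        have h1 : x i * (M i j * x j) ≤ |M i j| * (|x i| * |x j|) := by
          calc x i * (M i j * x j) ≤ |x i * (M i j * x j)| := le_abs_self _
            _ = |M i j| * (|x i| * |x j|) := by rw [abs_mul, abs_mul]; ring
        exact h1.trans (mul_le_mul_of_nonneg_left (hxx i j) (abs_nonneg _))
    _ = (∑ i, ∑ j, |M i j|) * (x ⬝ᵥ x) := by rw [Finset.sum_mul]; simp [Finset.sum_mul]

private lemma dot_mulVec_self {n : ℕ} (B : Matrix (Fin n) (Fin n) ℝ) (y : Fin n → ℝ) :
    (B *ᵥ y) ⬝ᵥ (B *ᵥ y) = y ⬝ᵥ (Bᵀ * B) *ᵥ y := by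
  conv_rhs => rw [← mulVec_mulVec, dotProduct_mulVec, vecMul_transpose]

open scoped MatrixOrder in
private lemma posdef_lower {n : ℕ} {N : Matrix (Fin n) (Fin n) ℝ} (hN : N.PosDef) :
    ∃ C : ℝ, 0 ≤ C ∧ ∀ x : Fin n → ℝ, x ⬝ᵥ x ≤ C * (x ⬝ᵥ N *ᵥ x) := by
  set R := CFC.sqrt N with hRdef
  have hRsq : R * R = N := CFC.sqrt_mul_sqrt_self N hN.posSemidef.nonneg
  have hRherm : Rᵀ = R := by
    have := (CFC.sqrt_nonneg N).posSemidef.1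
    rwa [Matrix.IsHermitian, conjTranspose_eq_transpose_of_trivial] at this
  have hdetN : N.det ≠ 0 := hN.det_pos.ne'
  have hdetR : IsUnit R.det := by
    have h : R.det * R.det = N.det := by rw [← det_mul, hRsq]
    refine isUnit_iff_ne_zero.mpr fun h0 => hdetN ?_
    rw [← h, h0, mul_zero]
  set C : ℝ := ∑ i, ∑ j, |(R⁻¹ᵀ * R⁻¹) i j| with hCdef
  have hC0 : 0 ≤ C := Finset.sum_nonneg fun i _ =>
    Finset.sum_nonneg fun j _ => abs_nonneg _
  refine ⟨C, hC0, fun x => ?_⟩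
  have hx : R⁻¹ *ᵥ (R *ᵥ x) = x := by
    rw [mulVec_mulVec, Matrix.nonsing_inv_mul R hdetR, one_mulVec]
  calc x ⬝ᵥ x = (R⁻¹ *ᵥ (R *ᵥ x)) ⬝ᵥ (R⁻¹ *ᵥ (R *ᵥ x)) := by rw [hx]
    _ = (R *ᵥ x) ⬝ᵥ (R⁻¹ᵀ * R⁻¹) *ᵥ (R *ᵥ x) := dot_mulVec_self _ _
    _ ≤ C * ((R *ᵥ x) ⬝ᵥ (R *ᵥ x)) := quad_abs_bound _ _
    _ = C * (x ⬝ᵥ N *ᵥ x) := by rw [dot_mulVec_self, hRherm, hRsq]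

/-- If `A` has a real eigenvalue `lam` of largest modulus with right
eigenvector `v`, and `P = Pᵀ ⪰ 0` with `ker P = span(v)`, then
`sup_{x ∉ ker P} (xᵀAᵀPAx)/(xᵀPx) = min {b : AᵀPA ⪯ bP}`. -/
theorem stmt14 {n : ℕ} (A : Matrix (Fin n) (Fin n) ℝ)
    (lam : ℝ) (v : Fin n → ℝ) (hv : v ≠ 0) (heig : A.mulVec v = lam • v)
    (hdom : ∀ μ ∈ spectrum ℂ (A.map Complex.ofReal), ‖μ‖ ≤ |lam|)
    (P : Matrix (Fin n) (Fin n) ℝ) (hP : P.PosSemidef)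
    (hker : ∀ x : Fin n → ℝ, P.mulVec x = 0 ↔ ∃ t : ℝ, x = t • v) :
    sSup {r : ℝ | ∃ x : Fin n → ℝ, P.mulVec x ≠ 0 ∧
        r = (x ⬝ᵥ (Aᵀ * P * A).mulVec x) / (x ⬝ᵥ P.mulVec x)}
      = sInf {b : ℝ | (b • P - Aᵀ * P * A).PosSemidef} := by
  set Q : Matrix (Fin n) (Fin n) ℝ := Aᵀ * P * A with hQdef
  set S : Set ℝ := {r : ℝ | ∃ x : Fin n → ℝ, P.mulVec x ≠ 0 ∧
      r = (x ⬝ᵥ Q.mulVec x) / (x ⬝ᵥ P.mulVec x)} with hSdef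
  set T : Set ℝ := {b : ℝ | (b • P - Q).PosSemidef} with hTdef
  have hPv : P *ᵥ v = 0 := (hker v).mpr ⟨1, (one_smul ℝ v).symm⟩
  have hQpsd : Q.PosSemidef := by
    have := hP.conjTranspose_mul_mul_same A
    rwa [conjTranspose_eq_transpose_of_trivial] at this
  have hQherm : Qᵀ = Q := by
    have := hQpsd.1
    rwa [Matrix.IsHermitian, conjTranspose_eq_transpose_of_trivial] at this
  have hPherm : Pᵀ = P := by
    have := hP.1
    rwa [Matrix.IsHermitian, conjTranspose_eq_transpose_of_trivial] at this
  have hQv : Q *ᵥ v = 0 := by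
    rw [hQdef, ← mulVec_mulVec, ← mulVec_mulVec, heig, mulVec_smul, hPv, smul_zero,
      mulVec_zero]
  have hPquad : ∀ x : Fin n → ℝ, 0 ≤ x ⬝ᵥ P *ᵥ x := by
    intro x; simpa using hP.dotProduct_mulVec_nonneg x
  have hbPQ : ∀ (b : ℝ) (x : Fin n → ℝ),
      x ⬝ᵥ (b • P - Q) *ᵥ x = b * (x ⬝ᵥ P *ᵥ x) - x ⬝ᵥ Q *ᵥ x := by
    intro b x
    rw [sub_mulVec, dotProduct_sub, smul_mulVec, dotProduct_smul, smul_eq_mul]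
  have hherm : ∀ b : ℝ, (b • P - Q).IsHermitian := by
    intro b
    have h : (b • P - Q)ᵀ = b • P - Q := by
      rw [transpose_sub, transpose_smul, hPherm, hQherm]
    rwa [Matrix.IsHermitian, conjTranspose_eq_transpose_of_trivial]
  have hTmem : ∀ b : ℝ, b ∈ T ↔ ∀ x : Fin n → ℝ, x ⬝ᵥ Q *ᵥ x ≤ b * (x ⬝ᵥ P *ᵥ x) := by
    intro b
    constructor
    · intro hb x
      have h := hb.dotProduct_mulVec_nonneg x
      simp only [star_trivial] at h
      rw [hbPQ] at h
      linarith
    · intro hb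
      refine PosSemidef.of_dotProduct_mulVec_nonneg (hherm b) fun x => ?_
      simp only [star_trivial]
      rw [hbPQ]
      linarith [hb x]
  have hPzero_of_quad : ∀ x : Fin n → ℝ, x ⬝ᵥ P *ᵥ x = 0 → P *ᵥ x = 0 := by
    intro x hx
    have h2 := (hP.dotProduct_mulVec_zero_iff x).mp
    simp only [star_trivial] at h2
    exact h2 hx
  have hpos : ∀ x : Fin n → ℝ, P *ᵥ x ≠ 0 → 0 < x ⬝ᵥ P *ᵥ x := by
    intro x hx
    rcases lt_or_eq_of_le (hPquad x) with h | h
    · exact h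
    · exact absurd (hPzero_of_quad x h.symm) hx
  -- T equals the set of upper bounds of S
  have hTub : T = upperBounds S := by
    ext b
    constructor
    · intro hb r hr
      obtain ⟨x, hx, rfl⟩ := hr
      have hp := hpos x hx
      rw [div_le_iff₀ hp]
      have := (hTmem b).mp hb x
      linarith
    · intro hb
      rw [hTmem]
      intro x
      by_cases hx : P *ᵥ x = 0
      · obtain ⟨t, rfl⟩ := (hker x).mp hx
        have h1 : Q *ᵥ (t • v) = 0 := by rw [mulVec_smul, hQv, smul_zero]
        rw [h1, hx]
        simp
      · have hp := hpos x hx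
        have hr : (x ⬝ᵥ Q *ᵥ x) / (x ⬝ᵥ P *ᵥ x) ∈ S := ⟨x, hx, rfl⟩
        have h := hb hr
        rw [div_le_iff₀ hp] at h
        linarith
  -- existence of an element of T
  have hbdd : ∃ b : ℝ, b ∈ T := by
    set P' : Matrix (Fin n) (Fin n) ℝ := P + vecMulVec v v with hP'def
    have hvvmul : ∀ y : Fin n → ℝ, (vecMulVec v v) *ᵥ y = (v ⬝ᵥ y) • v := by
      intro y
      funext i
      simp only [vecMulVec, mulVec, dotProduct, Matrix.of_apply, Pi.smul_apply, smul_eq_mul,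
        Finset.sum_mul, Finset.mul_sum]
      exact Finset.sum_congr rfl fun j _ => by ring
    have hvvquad : ∀ x y : Fin n → ℝ,
        x ⬝ᵥ (vecMulVec v v) *ᵥ y = (v ⬝ᵥ y) * (x ⬝ᵥ v) := by
      intro x y
      rw [hvvmul, dotProduct_smul, smul_eq_mul]
    have hvv : 0 < v ⬝ᵥ v := by
      have hnn : 0 ≤ v ⬝ᵥ v := Finset.sum_nonneg fun i _ => mul_self_nonneg (v i)
      rcases lt_or_eq_of_le hnn with h | h
      · exact h
      · exact absurd (dotProduct_self_eq_zero.mp h.symm) hv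
    have hP'pd : P'.PosDef := by
      refine PosDef.of_dotProduct_mulVec_pos ?_ ?_
      · have h : P'ᵀ = P' := by
          have hvvT : (vecMulVec v v)ᵀ = vecMulVec v v := by
            ext i j
            simp [vecMulVec, mul_comm]
          rw [hP'def, transpose_add, hPherm, hvvT]
        rwa [Matrix.IsHermitian, conjTranspose_eq_transpose_of_trivial]
      · intro x hx
        simp only [star_trivial]
        rw [hP'def, add_mulVec, dotProduct_add, hvvquad]
        have h1 := hPquad x
        rcases lt_or_eq_of_le h1 with h | h
        · have h2 : 0 ≤ (v ⬝ᵥ x) * (x ⬝ᵥ v) := by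
            rw [dotProduct_comm v x]; exact mul_self_nonneg _
          linarith
        · have hPx : P *ᵥ x = 0 := hPzero_of_quad x h.symm
          obtain ⟨t, rfl⟩ := (hker x).mp hPx
          have ht : t ≠ 0 := fun h0 => hx (by rw [h0, zero_smul])
          have htv : (t • v) ⬝ᵥ v ≠ 0 := by
            rw [smul_dotProduct, smul_eq_mul]
            exact mul_ne_zero ht hvv.ne'
          have h3 : 0 < ((t • v) ⬝ᵥ v) * ((t • v) ⬝ᵥ v) := mul_self_pos.mpr htv
          rw [hPx, dotProduct_zero, dotProduct_comm v (t • v)]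
          linarith
    obtain ⟨C, hC0, hC⟩ := posdef_lower hP'pd
    set CQ : ℝ := ∑ i, ∑ j, |Q i j| with hCQdef
    have hCQ0 : 0 ≤ CQ := Finset.sum_nonneg fun i _ =>
      Finset.sum_nonneg fun j _ => abs_nonneg _
    refine ⟨CQ * C, (hTmem _).mpr fun x => ?_⟩
    set t : ℝ := (v ⬝ᵥ x) / (v ⬝ᵥ v) with htdef
    set y : Fin n → ℝ := x - t • v with hydef
    have hvy : v ⬝ᵥ y = 0 := by
      rw [hydef, dotProduct_sub, dotProduct_smul, smul_eq_mul, htdef,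
        div_mul_cancel₀ _ hvv.ne', sub_self]
    have hxy : x = y + t • v := by rw [hydef]; abel
    have key : ∀ M : Matrix (Fin n) (Fin n) ℝ, Mᵀ = M → M *ᵥ v = 0 →
        x ⬝ᵥ M *ᵥ x = y ⬝ᵥ M *ᵥ y := by
      intro M hM hMv
      have hvMy : v ⬝ᵥ M *ᵥ y = 0 := by
        rw [dotProduct_mulVec, ← hM, vecMul_transpose, hMv, zero_dotProduct]
      conv_lhs => rw [hxy]
      rw [mulVec_add, mulVec_smul, hMv, smul_zero, add_zero, add_dotProduct,
        smul_dotProduct, smul_eq_mul, hvMy, mul_zero, add_zero]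
    calc x ⬝ᵥ Q *ᵥ x = y ⬝ᵥ Q *ᵥ y := key Q hQherm hQv
      _ ≤ CQ * (y ⬝ᵥ y) := quad_abs_bound Q y
      _ ≤ CQ * (C * (y ⬝ᵥ P' *ᵥ y)) := mul_le_mul_of_nonneg_left (hC y) hCQ0
      _ = CQ * C * (y ⬝ᵥ P *ᵥ y) := by
          rw [hP'def, add_mulVec, dotProduct_add, hvvquad y y, hvy, zero_mul, add_zero,
            mul_assoc]
      _ = CQ * C * (x ⬝ᵥ P *ᵥ x) := by rw [key P hPherm hPv]
  -- conclude
  by_cases hS : S.Nonempty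
  · obtain ⟨b, hb⟩ := hbdd
    have hbub : b ∈ upperBounds S := by rw [← hTub]; exact hb
    have hlub := isLUB_csSup hS ⟨b, hbub⟩
    rw [hTub]
    exact hlub.csInf_eq.symm
  · have hSe : S = ∅ := Set.not_nonempty_iff_eq_empty.mp hS
    have hPall : ∀ x : Fin n → ℝ, P *ᵥ x = 0 := by
      intro x
      by_contra hx
      exact hS ⟨_, x, hx, rfl⟩
    have hTuniv : T = Set.univ := by
      ext b
      simp only [Set.mem_univ, iff_true]
      show b ∈ T
      refine (hTmem b).mpr fun x => ?_
      have hQx : Q *ᵥ x = 0 := by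
        rw [hQdef, ← mulVec_mulVec, ← mulVec_mulVec, hPall, mulVec_zero]
      rw [hQx, hPall x]
      simp
    rw [hSe, hTuniv, Real.sSup_empty, csInf_of_not_bddBelow not_bddBelow_univ,
      Real.sInf_empty]
end

section
/- For a row stochastic matrix A ∈ ℝ^{n×n}, the C_nᵀ-weighted induced ℓ_∞ seminorm of A, i.e., sup { max_{i,j} |(Ax)_i − (Ax)_j| : max_{i,j} |x_i − x_j| ≤ 1 }, equals (1/2) max_{i,j} ∑ₖ |A_{ik} − A_{jk}|. -/
open Matrix

lemma stmt16_aux_bdd {n : ℕ} (f : Fin n → ℝ) : BddAbove (Set.range f) :=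
  Set.Finite.bddAbove (Set.finite_range f)

/-- For a row stochastic `A`, the `C_nᵀ`-weighted induced ℓ_∞ seminorm
`sup {max_{i,j} |(Ax)_i − (Ax)_j| : max_{i,j} |x_i − x_j| ≤ 1}` equals
`(1/2) max_{i,j} ∑ₖ |A_{ik} − A_{jk}|`. -/
theorem stmt16 {n : ℕ} (A : Matrix (Fin n) (Fin n) ℝ)
    (hA0 : ∀ i j, 0 ≤ A i j) (hA1 : ∀ i, ∑ j, A i j = 1) :
    sSup {r : ℝ | ∃ x : Fin n → ℝ,
        (⨆ i : Fin n, ⨆ j : Fin n, |x i - x j|) ≤ 1 ∧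
        r = ⨆ i : Fin n, ⨆ j : Fin n, |A.mulVec x i - A.mulVec x j|}
      = (1 / 2) * ⨆ i : Fin n, ⨆ j : Fin n, ∑ k, |A i k - A j k| := by
  classical
  set S : Set ℝ := {r : ℝ | ∃ x : Fin n → ℝ,
        (⨆ i : Fin n, ⨆ j : Fin n, |x i - x j|) ≤ 1 ∧
        r = ⨆ i : Fin n, ⨆ j : Fin n, |A.mulVec x i - A.mulVec x j|} with hS
  set D : ℝ := ⨆ i : Fin n, ⨆ j : Fin n, ∑ k, |A i k - A j k| with hD
  rcases Nat.eq_zero_or_pos n with hn | hn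
  · subst hn
    have h0 : ∀ f : Fin 0 → ℝ, (⨆ i : Fin 0, f i) = 0 := fun f => by
      rw [iSup, Set.range_eq_empty, Real.sSup_empty]
    have hset : S = {(0:ℝ)} := by
      ext r
      constructor
      · rintro ⟨x, -, rfl⟩
        simp [h0]
      · rintro rfl
        exact ⟨fun _ => 0, by rw [h0]; norm_num, (h0 _).symm⟩
    rw [hset, csSup_singleton, hD, h0]
    ring
  · have hne : Nonempty (Fin n) := ⟨⟨0, hn⟩⟩
    -- D sandwich: each sum is ≤ D
    have hsumD : ∀ i j : Fin n, (∑ k, |A i k - A j k|) ≤ D := by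
      intro i j
      calc (∑ k, |A i k - A j k|) ≤ ⨆ j : Fin n, ∑ k, |A i k - A j k| :=
            le_ciSup (stmt16_aux_bdd (fun j => ∑ k, |A i k - A j k|)) j
        _ ≤ D := le_ciSup (stmt16_aux_bdd (fun i => ⨆ j : Fin n, ∑ k, |A i k - A j k|)) i
    -- Upper bound: every element of S is ≤ (1/2) * D
    have hub : ∀ r ∈ S, r ≤ (1/2) * D := by
      rintro r ⟨x, hx, rfl⟩
      have hxij : ∀ i j : Fin n, |x i - x j| ≤ 1 := by
        intro i j
        calc |x i - x j| ≤ ⨆ j : Fin n, |x i - x j| :=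
              le_ciSup (stmt16_aux_bdd (fun j => |x i - x j|)) j
          _ ≤ ⨆ i : Fin n, ⨆ j : Fin n, |x i - x j| :=
              le_ciSup (stmt16_aux_bdd (fun i => ⨆ j : Fin n, |x i - x j|)) i
          _ ≤ 1 := hx
      obtain ⟨i0, hi0⟩ := Finite.exists_max x
      obtain ⟨j0, hj0⟩ := Finite.exists_min x
      set m : ℝ := (x i0 + x j0) / 2 with hm
      have hosc : x i0 - x j0 ≤ 1 := le_trans (le_abs_self _) (hxij i0 j0)
      have hkm : ∀ k, |x k - m| ≤ 1/2 := by
        intro k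
        rw [abs_le]
        constructor
        · have := hj0 k; simp only [hm]; linarith
        · have := hi0 k; simp only [hm]; linarith
      have key : ∀ i j : Fin n, |A.mulVec x i - A.mulVec x j|
          ≤ (1/2) * ∑ k, |A i k - A j k| := by
        intro i j
        have h1 : A.mulVec x i - A.mulVec x j = ∑ k, (A i k - A j k) * (x k - m) := by
          have h2 : ∑ k, (A i k - A j k) * (x k - m)
              = (∑ k, A i k * x k) - (∑ k, A j k * x k)
                - ((∑ k, A i k) * m - (∑ k, A j k) * m) := by
            simp only [sub_mul, mul_sub, Finset.sum_sub_distrib, Finset.sum_mul]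
          simp only [Matrix.mulVec, dotProduct]
          rw [h2, hA1 i, hA1 j]
          ring
        rw [h1]
        calc |∑ k, (A i k - A j k) * (x k - m)|
            ≤ ∑ k, |(A i k - A j k) * (x k - m)| := Finset.abs_sum_le_sum_abs _ _
          _ ≤ ∑ k, |A i k - A j k| * (1/2) := by
              apply Finset.sum_le_sum
              intro k _
              rw [abs_mul]
              exact mul_le_mul_of_nonneg_left (hkm k) (abs_nonneg _)
          _ = (1/2) * ∑ k, |A i k - A j k| := by
              rw [← Finset.sum_mul]; ring
      apply ciSup_le
      intro i
      apply ciSup_le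
      intro j
      calc |A.mulVec x i - A.mulVec x j| ≤ (1/2) * ∑ k, |A i k - A j k| := key i j
        _ ≤ (1/2) * D := by
            have := hsumD i j
            linarith
    have hbdd : BddAbove S := ⟨(1/2) * D, hub⟩
    have hSne : S.Nonempty := by
      refine ⟨⨆ i : Fin n, ⨆ j : Fin n, |A.mulVec (fun _ => 0) i - A.mulVec (fun _ => 0) j|,
        fun _ => (0:ℝ), ?_, rfl⟩
      simp only [sub_self, abs_zero, ciSup_const]
      norm_num
    -- Lower bound: for each i j, (1/2)∑|A i k - A j k| ≤ sSup S
    have hlb : ∀ i j : Fin n, (1/2) * (∑ k, |A i k - A j k|) ≤ sSup S := by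
      intro i j
      set x : Fin n → ℝ := fun k => if A j k ≤ A i k then (1/2 : ℝ) else -(1/2 : ℝ) with hx
      have hxb : ∀ a b : Fin n, |x a - x b| ≤ 1 := by
        intro a b
        simp only [hx]
        split_ifs <;> norm_num
      have hx1 : (⨆ i : Fin n, ⨆ j : Fin n, |x i - x j|) ≤ 1 := by
        apply ciSup_le; intro a; apply ciSup_le; intro b; exact hxb a b
      have hval : A.mulVec x i - A.mulVec x j = (1/2) * ∑ k, |A i k - A j k| := by
        simp only [Matrix.mulVec, dotProduct]
        rw [← Finset.sum_sub_distrib, Finset.mul_sum]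
        apply Finset.sum_congr rfl
        intro k _
        simp only [hx]
        split_ifs with h
        · rw [abs_of_nonneg (by linarith)]; ring
        · rw [abs_of_neg (by linarith)]; ring
      have hmem : (⨆ i : Fin n, ⨆ j : Fin n, |A.mulVec x i - A.mulVec x j|) ∈ S :=
        ⟨x, hx1, rfl⟩
      have h2 : (1/2) * (∑ k, |A i k - A j k|)
          ≤ ⨆ i : Fin n, ⨆ j : Fin n, |A.mulVec x i - A.mulVec x j| := by
        calc (1/2) * (∑ k, |A i k - A j k|) = |A.mulVec x i - A.mulVec x j| := by
              rw [hval, abs_of_nonneg]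
              positivity
          _ ≤ ⨆ j : Fin n, |A.mulVec x i - A.mulVec x j| :=
              le_ciSup (stmt16_aux_bdd (fun j => |A.mulVec x i - A.mulVec x j|)) j
          _ ≤ _ := le_ciSup (stmt16_aux_bdd (fun i => ⨆ j : Fin n, |A.mulVec x i - A.mulVec x j|)) i
      exact le_trans h2 (le_csSup hbdd hmem)
    apply le_antisymm
    · exact csSup_le hSne hub
    · have : D ≤ 2 * sSup S := by
        apply ciSup_le
        intro i
        apply ciSup_le
        intro j
        have := hlb i j
        linarith
      linarith
end

section
/- For a row stochastic matrix A ∈ ℝ^{n×n} and any vector x ∈ ℝⁿ, max_{i,j} |(Ax)_i − (Ax)_j| ≤ (1 − min_{i,j} ∑ₖ min(A_{ik}, A_{jk})) · max_{i,j} |x_i − x_j|. -/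
open Matrix

/-- For a row stochastic `A` and any `x`, the oscillation of `Ax` is at most
the Dobrushin coefficient `1 − min_{i,j} ∑ₖ min(A_{ik}, A_{jk})` times the oscillation of `x`. -/
theorem stmt17 {n : ℕ} (A : Matrix (Fin n) (Fin n) ℝ)
    (hA0 : ∀ i j, 0 ≤ A i j) (hA1 : ∀ i, ∑ j, A i j = 1) (x : Fin n → ℝ) :
    (⨆ i : Fin n, ⨆ j : Fin n, |A.mulVec x i - A.mulVec x j|)
      ≤ (1 - ⨅ i : Fin n, ⨅ j : Fin n, ∑ k, min (A i k) (A j k))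
        * ⨆ i : Fin n, ⨆ j : Fin n, |x i - x j| := by
  rcases Nat.eq_zero_or_pos n with hn | hn
  · subst hn
    simp [Real.iSup_of_isEmpty, Real.iInf_of_isEmpty]
  haveI : Nonempty (Fin n) := ⟨⟨0, hn⟩⟩
  set M := ⨆ i : Fin n, ⨆ j : Fin n, |x i - x j| with hM
  set δ := ⨅ i : Fin n, ⨅ j : Fin n, ∑ k, min (A i k) (A j k) with hδ
  have hxM : ∀ i j : Fin n, |x i - x j| ≤ M := by
    intro i j
    calc |x i - x j| ≤ ⨆ j, |x i - x j| :=
          le_ciSup (f := fun j : Fin n => |x i - x j|)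
            (Set.Finite.bddAbove (Set.finite_range _)) j
      _ ≤ M := le_ciSup (f := fun i : Fin n => ⨆ j, |x i - x j|)
          (Set.Finite.bddAbove (Set.finite_range _)) i
  have hM0 : 0 ≤ M := by have := hxM ⟨0, hn⟩ ⟨0, hn⟩; simpa using this
  have hδle : ∀ i j : Fin n, δ ≤ ∑ k, min (A i k) (A j k) := by
    intro i j
    calc δ ≤ ⨅ j, ∑ k, min (A i k) (A j k) :=
          ciInf_le (f := fun i : Fin n => ⨅ j, ∑ k, min (A i k) (A j k))
            (Set.Finite.bddBelow (Set.finite_range _)) i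
      _ ≤ _ := ciInf_le (f := fun j : Fin n => ∑ k, min (A i k) (A j k))
          (Set.Finite.bddBelow (Set.finite_range _)) j
  have key : ∀ i j : Fin n, A.mulVec x i - A.mulVec x j ≤ (1 - δ) * M := by
    intro i j
    set m : Fin n → ℝ := fun k => min (A i k) (A j k) with hm
    set s := ∑ k, m k with hs
    have hs1 : s ≤ 1 := by
      rw [hs, ← hA1 i]
      exact Finset.sum_le_sum fun k _ => min_le_left _ _
    obtain ⟨u, -, hu⟩ := Finset.exists_max_image Finset.univ x ⟨⟨0, hn⟩, Finset.mem_univ _⟩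
    obtain ⟨v, -, hv⟩ := Finset.exists_min_image Finset.univ x ⟨⟨0, hn⟩, Finset.mem_univ _⟩
    have h_up : ∑ k, (A i k - m k) * x k ≤ (1 - s) * x u := by
      calc ∑ k, (A i k - m k) * x k ≤ ∑ k, (A i k - m k) * x u :=
            Finset.sum_le_sum fun k _ => mul_le_mul_of_nonneg_left (hu k (Finset.mem_univ k))
              (by simp [hm, sub_nonneg, min_le_left])
        _ = (1 - s) * x u := by
            rw [← Finset.sum_mul, Finset.sum_sub_distrib, hA1 i, hs]
    have h_lo : (1 - s) * x v ≤ ∑ k, (A j k - m k) * x k := by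
      calc (1 - s) * x v = ∑ k, (A j k - m k) * x v := by
            rw [← Finset.sum_mul, Finset.sum_sub_distrib, hA1 j, hs]
        _ ≤ ∑ k, (A j k - m k) * x k :=
            Finset.sum_le_sum fun k _ => mul_le_mul_of_nonneg_left (hv k (Finset.mem_univ k))
              (by simp [hm, sub_nonneg, min_le_right])
    have hdiff : A.mulVec x i - A.mulVec x j
        = ∑ k, (A i k - m k) * x k - ∑ k, (A j k - m k) * x k := by
      simp [Matrix.mulVec, dotProduct, sub_mul, Finset.sum_sub_distrib]
    calc A.mulVec x i - A.mulVec x j ≤ (1 - s) * x u - (1 - s) * x v := by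
          rw [hdiff]; exact sub_le_sub h_up h_lo
      _ = (1 - s) * (x u - x v) := by ring
      _ ≤ (1 - s) * |x u - x v| := mul_le_mul_of_nonneg_left (le_abs_self _) (by linarith)
      _ ≤ (1 - s) * M := mul_le_mul_of_nonneg_left (hxM u v) (by linarith)
      _ ≤ (1 - δ) * M := mul_le_mul_of_nonneg_right
          (by have := hδle i j; rw [← hs] at this; linarith) hM0
  apply ciSup_le; intro i; apply ciSup_le; intro j
  rw [abs_sub_le_iff]
  exact ⟨key i j, key j i⟩
end
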